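/- arXiv:2102.00050 — 3 statements merged into one kernel-verified Lean document; each statement's English description precedes it below -/
import Mathlib

section
/- For any compact set Θ ⊂ R^d with Leb(Θ) > 0, the normalization constant Z_{v,τ} = (2πv/n)^{-d/2} ∫_{R^d} e^{-(n/(2v)) d(z, Θ_τ)^2} dz satisfies ln Z_{v,τ} = (d/2) ln(n/(2πv)) + ln Leb(Θ_τ) + o(1) as n → ∞ (for fixed v > 0 and τ > 0). -/
open MeasureTheory Filter Real

section aux

variable {d : ℕ}

lemma integrable_rexp_neg_mul_sq_norm' {b : ℝ} (hb : 0 < b) :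
    Integrable (fun z : EuclideanSpace ℝ (Fin d) => rexp (-b * ‖z‖ ^ 2)) := by
  have h := GaussianFourier.integrable_cexp_neg_mul_sq_norm_add
    (V := EuclideanSpace ℝ (Fin d)) (b := (b : ℂ)) (by simpa using hb) 0 0
  refine h.norm.congr (Filter.Eventually.of_forall fun z => ?_)
  simp [Complex.norm_exp, ← Complex.ofReal_pow]

lemma integrable_exp_neg_infDist_sq {K : Set (EuclideanSpace ℝ (Fin d))}
    (hK : IsCompact K) (hne : K.Nonempty) {c : ℝ} (hc : 0 < c) :
    Integrable (fun z : EuclideanSpace ℝ (Fin d) =>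
      rexp (-c * Metric.infDist z K ^ 2)) := by
  obtain ⟨R, hR⟩ := hK.isBounded.subset_closedBall 0
  have key : ∀ z : EuclideanSpace ℝ (Fin d),
      ‖z‖ ^ 2 / 2 - (R ^ 2 + 1) ≤ Metric.infDist z K ^ 2 := by
    intro z
    rcases le_or_gt ‖z‖ (R + 1) with h | h
    · nlinarith [Metric.infDist_nonneg (x := z) (s := K), norm_nonneg z, sq_nonneg (R - 1),
        sq_nonneg (Metric.infDist z K)]
    · have h1 : ‖z‖ - R ≤ Metric.infDist z K := by
        by_contra hcon
        push_neg at hcon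
        obtain ⟨y, hy, hdy⟩ := (Metric.infDist_lt_iff hne).1 hcon
        have hyR : ‖y‖ ≤ R := by simpa [Metric.mem_closedBall] using hR hy
        have := norm_sub_norm_le z y
        rw [dist_eq_norm] at hdy
        linarith
      have hR0 : 0 ≤ R := le_trans (norm_nonneg _) ((by simpa using hR hne.choose_spec))
      have h2 : 0 ≤ ‖z‖ - R := by linarith
      have h3 : (‖z‖ - R) ^ 2 ≤ Metric.infDist z K ^ 2 := by nlinarith
      nlinarith [sq_nonneg (‖z‖ - 2 * R)]
  refine (Integrable.const_mul (integrable_rexp_neg_mul_sq_norm'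
      (b := c / 2) (by positivity)) (rexp (c * (R ^ 2 + 1)))).mono'
      ?_ (Filter.Eventually.of_forall fun z => ?_)
  · exact (Real.continuous_exp.comp
      (((continuous_const).mul ((Metric.continuous_infDist_pt K).pow 2)))).aestronglyMeasurable
  · rw [Real.norm_eq_abs, abs_of_pos (Real.exp_pos _), ← Real.exp_add]
    apply Real.exp_le_exp.2
    have := key z
    nlinarith

end aux

/-- for a compact `Θ ⊆ ℝ^d` with `Leb(Θ) > 0` and fixed `v, τ > 0`,
the normalization constant
`Z_{v,τ} = (2πv/n)^{-d/2} ∫ e^{-(n/(2v)) d(z,Θ_τ)²} dz` satisfies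
`ln Z_{v,τ} = (d/2) ln(n/(2πv)) + ln Leb(Θ_τ) + o(1)` as `n → ∞`. -/
theorem log_shtarkov_normalization (d : ℕ) (Θ : Set (EuclideanSpace ℝ (Fin d)))
    (hΘ : IsCompact Θ) (h0 : 0 < volume Θ) (v τ : ℝ) (hv : 0 < v) (hτ : 0 < τ) :
    Tendsto (fun n : ℕ =>
        Real.log ((2 * π * v / (n : ℝ)) ^ (-(d : ℝ) / 2) *
          ∫ z : EuclideanSpace ℝ (Fin d),
            Real.exp (-((n : ℝ) / (2 * v)) * (Metric.infDist z (Metric.cthickening τ Θ)) ^ 2))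
        - ((d : ℝ) / 2 * Real.log ((n : ℝ) / (2 * π * v))
            + Real.log (volume (Metric.cthickening τ Θ)).toReal))
      atTop (nhds 0) := by
  set K : Set (EuclideanSpace ℝ (Fin d)) := Metric.cthickening τ Θ with hKdef
  have hKc : IsCompact K := hΘ.cthickening
  have hKcl : IsClosed K := Metric.isClosed_cthickening
  have hKm : MeasurableSet K := hKcl.measurableSet
  have hΘK : Θ ⊆ K := Metric.self_subset_cthickening Θ
  have hKne : K.Nonempty :=
    (MeasureTheory.nonempty_of_measure_ne_zero h0.ne').mono hΘK
  have hKfin : volume K ≠ ⊤ := hKc.measure_lt_top.ne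
  set LK : ℝ := (volume K).toReal with hLKdef
  have hLK : 0 < LK := ENNReal.toReal_pos (lt_of_lt_of_le h0 (measure_mono hΘK)).ne' hKfin
  -- the integrals
  set F : ℕ → EuclideanSpace ℝ (Fin d) → ℝ :=
    fun n z => rexp (-((n : ℝ) / (2 * v)) * Metric.infDist z K ^ 2) with hFdef
  have hFint : ∀ n : ℕ, 1 ≤ n → Integrable (F n) := by
    intro n hn
    have : (0:ℝ) < (n : ℝ) / (2 * v) := by positivity
    simpa [hFdef, neg_mul] using
      integrable_exp_neg_infDist_sq hKc hKne this
  -- integral tends to LK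
  have hIlim : Tendsto (fun n : ℕ => ∫ z, F n z) atTop (nhds LK) := by
    have hmain : Tendsto (fun n : ℕ => ∫ z, F n z) atTop
        (nhds (∫ z, K.indicator (1 : EuclideanSpace ℝ (Fin d) → ℝ) z)) := by
      refine tendsto_integral_filter_of_dominated_convergence
        (fun z => rexp (-(1 / (2 * v)) * Metric.infDist z K ^ 2)) ?_ ?_ ?_ ?_
      · exact Filter.Eventually.of_forall fun n =>
          (Real.continuous_exp.comp ((continuous_const).mul
            ((Metric.continuous_infDist_pt K).pow 2))).aestronglyMeasurable
      · filter_upwards [eventually_ge_atTop 1] with n hn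
        refine Filter.Eventually.of_forall fun z => ?_
        rw [Real.norm_eq_abs, abs_of_pos (Real.exp_pos _)]
        apply Real.exp_le_exp.2
        have h1 : (1:ℝ) / (2 * v) ≤ (n : ℝ) / (2 * v) := by
          apply div_le_div_of_nonneg_right ?_ (by positivity)
          · exact_mod_cast hn
        nlinarith [Metric.infDist_nonneg (x := z) (s := K), sq_nonneg (Metric.infDist z K)]
      · exact integrable_exp_neg_infDist_sq hKc hKne (by positivity)
      · refine Filter.Eventually.of_forall fun z => ?_
        by_cases hz : z ∈ K
        · simp [hFdef, Metric.infDist_zero_of_mem hz, Set.indicator_of_mem hz]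
        · rw [Set.indicator_of_notMem hz]
          have ha : 0 < Metric.infDist z K :=
            (hKcl.notMem_iff_infDist_pos hKne).1 hz
          have h1 : Tendsto (fun n : ℕ => ((n : ℝ) / (2 * v)) * Metric.infDist z K ^ 2)
              atTop atTop :=
            Tendsto.atTop_mul_const (pow_pos ha 2)
              (Tendsto.atTop_div_const (by positivity) tendsto_natCast_atTop_atTop)
          have h2 : Tendsto (fun n : ℕ => -(((n : ℝ) / (2 * v)) * Metric.infDist z K ^ 2))
              atTop atBot := tendsto_neg_atTop_atBot.comp h1
          have := Real.tendsto_exp_atBot.comp h2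
          simpa only [hFdef, Function.comp_def, neg_mul] using this
    rwa [MeasureTheory.integral_indicator_one hKm] at hmain
  -- positivity of integrals
  have hIpos : ∀ n : ℕ, 1 ≤ n → LK ≤ ∫ z, F n z := by
    intro n hn
    have hind : Integrable (K.indicator (1 : EuclideanSpace ℝ (Fin d) → ℝ)) := by
      rw [integrable_indicator_iff hKm]
      exact integrableOn_const hKfin
    have := MeasureTheory.integral_mono hind (hFint n hn) ?_
    · rwa [MeasureTheory.integral_indicator_one hKm] at this
    · intro z
      by_cases hz : z ∈ K
      · simp [hFdef, Metric.infDist_zero_of_mem hz, Set.indicator_of_mem hz]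
      · rw [Set.indicator_of_notMem hz]
        exact (Real.exp_pos _).le
  -- log of integral tends to log LK
  have hloglim : Tendsto (fun n : ℕ => Real.log (∫ z, F n z)) atTop (nhds (Real.log LK)) :=
    hIlim.log hLK.ne'
  have hfinal : Tendsto (fun n : ℕ => Real.log (∫ z, F n z) - Real.log LK) atTop (nhds 0) := by
    simpa using hloglim.sub (tendsto_const_nhds (x := Real.log LK))
  refine hfinal.congr' ?_
  filter_upwards [eventually_ge_atTop 1] with n hn
  have hn0 : (0:ℝ) < (n : ℝ) := by exact_mod_cast hn
  have h2πv : (0:ℝ) < 2 * π * v := by positivity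
  have hbase : (0:ℝ) < 2 * π * v / (n : ℝ) := by positivity
  have hInpos : 0 < ∫ z, F n z := lt_of_lt_of_le hLK (hIpos n hn)
  rw [Real.log_mul (by positivity) hInpos.ne', Real.log_rpow hbase,
    Real.log_div h2πv.ne' hn0.ne', Real.log_div hn0.ne' h2πv.ne']
  ring
end

section
/- The function λ ↦ h(λ)/(1-λ), where h(λ) = -λ log λ - (1-λ) log(1-λ) is the binary entropy function, is (monotonically) increasing on [0, 1). -/
open Real

lemma binent_hasDerivAt {x : ℝ} (hx0 : 0 < x) (hx1 : x < 1) :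
    HasDerivAt (fun l : ℝ =>
      (-(l * Real.log l) - (1 - l) * Real.log (1 - l)) / (1 - l))
      (-Real.log x / (1 - x) ^ 2) x := by
  have hx1' : (1 : ℝ) - x ≠ 0 := by linarith
  have h1 : HasDerivAt (fun l : ℝ => l * Real.log l) (Real.log x + 1) x :=
    Real.hasDerivAt_mul_log (ne_of_gt hx0)
  have hl : HasDerivAt (fun l : ℝ => 1 - l) (-1) x := by
    simpa using (hasDerivAt_id x).const_sub 1
  have h2 : HasDerivAt (fun l : ℝ => (1 - l) * Real.log (1 - l))
      ((Real.log (1 - x) + 1) * (-1)) x :=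
    (Real.hasDerivAt_mul_log hx1').comp x hl
  have hnum : HasDerivAt (fun l : ℝ => -(l * Real.log l) - (1 - l) * Real.log (1 - l))
      (-(Real.log x + 1) - (Real.log (1 - x) + 1) * (-1)) x := h1.neg.sub h2
  have this : HasDerivAt (fun l : ℝ =>
      (-(l * Real.log l) - (1 - l) * Real.log (1 - l)) / (1 - l)) _ x := hnum.div hl hx1'
  convert this using 1
  ring
  
/-- `λ ↦ h(λ)/(1-λ)` is increasing on `[0,1)`, where
`h(λ) = -λ log λ - (1-λ) log (1-λ)` is the binary entropy function. -/
theorem binaryEntropy_div_one_sub_monotone :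
    MonotoneOn (fun l : ℝ =>
      (-(l * Real.log l) - (1 - l) * Real.log (1 - l)) / (1 - l)) (Set.Ico 0 1) := by
  have hcont : ContinuousOn (fun l : ℝ =>
      (-(l * Real.log l) - (1 - l) * Real.log (1 - l)) / (1 - l)) (Set.Ico 0 1) := by
    apply ContinuousOn.div
    · apply ContinuousOn.sub
      · exact (Real.continuous_mul_log.continuousOn).neg
      · exact Real.continuous_mul_log.comp (continuous_const.sub continuous_id) |>.continuousOn
    · exact (continuous_const.sub continuous_id).continuousOn
    · intro x hx
      have := hx.2
      intro h
      simp only [Set.mem_Ico] at hx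
      linarith [sub_eq_zero.mp h]
  apply StrictMonoOn.monotoneOn
  apply strictMonoOn_of_deriv_pos (convex_Ico 0 1) hcont
  intro x hx
  rw [interior_Ico] at hx
  obtain ⟨hx0, hx1⟩ := hx
  rw [(binent_hasDerivAt hx0 hx1).deriv]
  have hlog : Real.log x < 0 := Real.log_neg hx0 hx1
  have h1x : (0:ℝ) < (1 - x)^2 := pow_pos (by linarith) 2
  exact div_pos (by linarith) h1x
end

section
/- Let Ψ(t) = E[e^{itX}] be the characteristic function of a real random variable X with E[X] well-defined, and suppose that for some n ≥ 1 the function t ↦ Ψ(t/n)^n is twice continuously differentiable on R. Then E[X^2] < ∞. -/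
open MeasureTheory Filter

section aux

lemma integrable_exp_I {α : Type*} [MeasurableSpace α] (μ : Measure α) [IsFiniteMeasure μ]
    (Y : α → ℝ) (hY : Measurable Y) :
    Integrable (fun a => Complex.exp (Complex.I * (Y a : ℂ))) μ := by
  refine (integrable_const (1 : ℝ)).mono' ?_ ?_
  · exact (Complex.measurable_exp.comp
      (measurable_const.mul (Complex.measurable_ofReal.comp hY))).aestronglyMeasurable
  · refine Filter.Eventually.of_forall fun a => ?_
    rw [mul_comm]
    simp [Complex.norm_exp]

lemma integrable_one_sub_cos {α : Type*} [MeasurableSpace α] (μ : Measure α) [IsFiniteMeasure μ]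
    (Y : α → ℝ) (hY : Measurable Y) :
    Integrable (fun a => 1 - Real.cos (Y a)) μ := by
  refine (integrable_const (2 : ℝ)).mono' ?_ ?_
  · exact (measurable_const.sub (Real.measurable_cos.comp hY)).aestronglyMeasurable
  · refine Filter.Eventually.of_forall fun a => ?_
    rw [Real.norm_eq_abs, abs_le]
    constructor <;> nlinarith [Real.cos_le_one (Y a), Real.neg_one_le_cos (Y a)]

end aux

section quad

lemma quad_bound (q : ℝ → ℝ) (hq : ContDiff ℝ 2 q) (hmax : ∀ t, q t ≤ q 0) :
    ∃ C > (0:ℝ), ∃ δ > (0:ℝ), ∀ t : ℝ, |t| ≤ δ → q 0 - q t ≤ C * t ^ 2 := by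
  have hdiff : Differentiable ℝ q := hq.differentiable (by norm_num)
  have h2 : ContDiff ℝ 1 (deriv q) := by
    rw [show (2 : WithTop ℕ∞) = 1 + 1 by norm_num, contDiff_succ_iff_deriv] at hq
    exact hq.2.2
  have hd0 : deriv q 0 = 0 := by
    refine IsLocalMax.deriv_eq_zero ?_
    exact Filter.Eventually.of_forall hmax
  set c := deriv (deriv q) 0 with hc
  have hder : HasDerivAt (deriv q) c 0 := ((h2.differentiable one_ne_zero) 0).hasDerivAt
  have hlo := (hasDerivAt_iff_isLittleO.mp hder).bound one_pos
  rw [Metric.eventually_nhds_iff] at hlo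
  obtain ⟨ε, hε, hball⟩ := hlo
  refine ⟨|c| + 1, by positivity, ε / 2, by positivity, fun t ht => ?_⟩
  have hbound : ∀ x : ℝ, |x| ≤ ε / 2 → |deriv q x| ≤ (|c| + 1) * |x| := by
    intro x hx
    have : dist x 0 < ε := by
      rw [Real.dist_eq, sub_zero]; linarith
    have := hball this
    rw [hd0, sub_zero, sub_zero, smul_eq_mul] at this
    have h1 : |deriv q x - x * c| ≤ 1 * |x| := by simpa [Real.norm_eq_abs] using this
    calc |deriv q x| ≤ |deriv q x - x * c| + |x * c| := by
          have := abs_sub_abs_le_abs_sub (deriv q x) (x * c); nlinarith [abs_nonneg (x*c)]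
      _ ≤ 1 * |x| + |x| * |c| := by rw [abs_mul]; linarith
      _ = (|c| + 1) * |x| := by ring
  rcases lt_trichotomy t 0 with htneg | rfl | htpos
  · obtain ⟨x, hx, hslope⟩ := exists_hasDerivAt_eq_slope q (deriv q) htneg
      (hdiff.continuous.continuousOn) (fun x _ => (hdiff x).hasDerivAt)
    have hxb : |x| ≤ ε / 2 := by
      rw [abs_le]; rw [abs_le] at ht
      constructor <;> [linarith [hx.1]; linarith [hx.2]]
    have := hbound x hxb
    have ht0 : q 0 - q t = deriv q x * (0 - t) := by
      have hne : (0:ℝ) - t ≠ 0 := by intro hh; nlinarith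
      rw [hslope, div_mul_eq_mul_div, eq_div_iff hne]; try ring
    rw [ht0]
    calc deriv q x * (0 - t) ≤ |deriv q x * (0 - t)| := le_abs_self _
      _ = |deriv q x| * |t| := by rw [abs_mul]; congr 1; rw [abs_sub_comm]; simp
      _ ≤ (|c| + 1) * |x| * |t| := by nlinarith [abs_nonneg t]
      _ = (|c| + 1) * (|x| * |t|) := by ring
      _ ≤ (|c| + 1) * t ^ 2 := by
          have hxt : |x| ≤ |t| := by
            rw [abs_of_neg htneg, abs_of_neg hx.2]; linarith [hx.1]
          refine mul_le_mul_of_nonneg_left ?_ (by positivity)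
          nlinarith [sq_abs t, abs_nonneg t, abs_nonneg x]
  · simp
  · obtain ⟨x, hx, hslope⟩ := exists_hasDerivAt_eq_slope q (deriv q) htpos
      (hdiff.continuous.continuousOn) (fun x _ => (hdiff x).hasDerivAt)
    have hxb : |x| ≤ ε / 2 := by
      rw [abs_le]; rw [abs_le] at ht
      constructor <;> [linarith [hx.1]; linarith [hx.2]]
    have := hbound x hxb
    have ht0 : q 0 - q t = deriv q x * (0 - t) := by
      have hne : t - 0 ≠ 0 := by simpa using ne_of_gt htpos
      rw [hslope, div_mul_eq_mul_div, eq_div_iff hne]; try ring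
    rw [ht0]
    calc deriv q x * (0 - t) ≤ |deriv q x * (0 - t)| := le_abs_self _
      _ = |deriv q x| * |t| := by rw [abs_mul]; congr 1; rw [abs_sub_comm]; simp
      _ ≤ (|c| + 1) * |x| * |t| := by nlinarith [abs_nonneg t]
      _ = (|c| + 1) * (|x| * |t|) := by ring
      _ ≤ (|c| + 1) * t ^ 2 := by
          have hxt : |x| ≤ |t| := by
            rw [abs_of_pos htpos, abs_of_pos hx.1]; linarith [hx.2]
          refine mul_le_mul_of_nonneg_left ?_ (by positivity)
          nlinarith [sq_abs t, abs_nonneg t, abs_nonneg x]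

end quad

lemma tendsto_two_one_sub_cos (d : ℝ) :
    Tendsto (fun t : ℝ => 2 * (1 - Real.cos (t * d)) / t ^ 2) (nhdsWithin 0 {0}ᶜ)
      (nhds (d ^ 2)) := by
  rcases eq_or_ne d 0 with rfl | hd
  · have : (fun t : ℝ => 2 * (1 - Real.cos (t * 0)) / t ^ 2) = fun _ => (0:ℝ) := by
      funext t; simp
    rw [this]; simpa using tendsto_const_nhds
  · have hsin : Tendsto (fun x : ℝ => Real.sin x / x) (nhdsWithin 0 {0}ᶜ) (nhds 1) := by
      have := (Real.hasDerivAt_sin 0)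
      rw [hasDerivAt_iff_tendsto_slope] at this
      simpa [slope_fun_def_field, Real.sin_zero, Real.cos_zero] using this
    have hmap : Tendsto (fun t : ℝ => t * d / 2) (nhdsWithin 0 {0}ᶜ) (nhdsWithin 0 {0}ᶜ) := by
      rw [tendsto_nhdsWithin_iff]
      constructor
      · have : Tendsto (fun t : ℝ => t * d / 2) (nhds 0) (nhds 0) := by
          have := ((continuous_id.mul continuous_const :
            Continuous fun t:ℝ => t * d).div_const 2).tendsto (0:ℝ)
          simpa using this
        exact this.mono_left nhdsWithin_le_nhds
      · filter_upwards [self_mem_nhdsWithin] with t ht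
        simp only [Set.mem_compl_iff, Set.mem_singleton_iff] at ht ⊢
        intro hc
        apply ht
        have := mul_eq_zero.mp (by linarith : t * d = 0)
        tauto
    have hcomp : Tendsto (fun t : ℝ => Real.sin (t * d / 2) / (t * d / 2))
        (nhdsWithin 0 {0}ᶜ) (nhds 1) := hsin.comp hmap
    have hsq : Tendsto (fun t : ℝ => d ^ 2 * (Real.sin (t * d / 2) / (t * d / 2)) ^ 2)
        (nhdsWithin 0 {0}ᶜ) (nhds (d ^ 2)) := by
      have := (hcomp.mul hcomp).const_mul (d ^ 2)
      simpa [sq] using this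
    refine hsq.congr' ?_
    filter_upwards [self_mem_nhdsWithin] with t ht
    simp only [Set.mem_compl_iff, Set.mem_singleton_iff] at ht
    have hcos : Real.cos (t * d) = 1 - 2 * Real.sin (t * d / 2) ^ 2 := by
      have hc1 := Real.cos_sq (t * d / 2)
      rw [show 2 * (t * d / 2) = t * d by ring] at hc1
      have h2 := Real.sin_sq_add_cos_sq (t * d / 2)
      linarith
    rw [hcos]
    field_simp
    ring

/-- if `Ψ(t) = E[e^{itX}]` is the characteristic function of `X`
(with `E[X]` well-defined) and `t ↦ Ψ(t/n)ⁿ` is twice continuously differentiable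
on `ℝ` for some `n ≥ 1`, then `E[X²] < ∞`. -/
theorem sq_integrable_of_charFun_pow_contDiff {Ω : Type*} [MeasurableSpace Ω]
    (P : Measure Ω) [IsProbabilityMeasure P] (X : Ω → ℝ) (hX : Measurable X)
    (hX1 : Integrable X P) (n : ℕ) (hn : 1 ≤ n)
    (h : ContDiff ℝ 2 (fun t : ℝ =>
        (∫ ω, Complex.exp (Complex.I * ((t / (n : ℝ)) * X ω : ℝ)) ∂P) ^ n)) :
    Integrable (fun ω => (X ω) ^ 2) P := by
  have hn0 : (n:ℝ) ≠ 0 := Nat.cast_ne_zero.mpr (by omega)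
  have hnpos : (0:ℝ) < n := by positivity
  set Ψ : ℝ → ℂ := fun t => ∫ ω, Complex.exp (Complex.I * ((t * X ω : ℝ) : ℂ)) ∂P with hΨdef
  have hg : ContDiff ℝ 2 (fun t : ℝ => Ψ (t / n) ^ n) := h
  have hΨle : ∀ t, ‖Ψ t‖ ≤ 1 := by
    intro t
    calc ‖Ψ t‖ ≤ ∫ ω, ‖Complex.exp (Complex.I * ((t * X ω : ℝ):ℂ))‖ ∂P :=
          norm_integral_le_integral_norm _
      _ = ∫ ω, (1:ℝ) ∂P := by
          congr 1; funext ω; rw [mul_comm]; simp [Complex.norm_exp]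
      _ = 1 := by simp
  have hΨ0 : Ψ 0 = 1 := by
    rw [hΨdef]
    simp
  -- the squared-norm function
  set q : ℝ → ℝ := fun t => ‖Ψ (t / n) ^ n‖ ^ 2 with hqdef
  have hqC : ContDiff ℝ 2 q := (contDiff_norm_sq ℂ (E := ℂ)).comp hg
  have hq0 : q 0 = 1 := by
    rw [hqdef]; simp [hΨ0]
  have hmax : ∀ t, q t ≤ q 0 := by
    intro t
    rw [hq0, hqdef]
    simp only [norm_pow]
    have h1 : ‖Ψ (t / n)‖ ^ n ≤ 1 := pow_le_one₀ (norm_nonneg _) (hΨle _)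
    have h0 : (0:ℝ) ≤ ‖Ψ (t / n)‖ ^ n := by positivity
    nlinarith
  obtain ⟨C, hC, δ, hδ, hquad⟩ := quad_bound q hqC hmax
  -- key quantitative bound on 1 - ‖Ψ s‖²
  have key : ∀ s : ℝ, |s| ≤ δ / n → 1 - ‖Ψ s‖ ^ 2 ≤ C * (n * s) ^ 2 := by
    intro s hs
    have hqns : q (n * s) = (‖Ψ s‖ ^ 2) ^ n := by
      rw [hqdef]
      simp only
      rw [show (n:ℝ) * s / n = s by rw [mul_comm]; exact mul_div_cancel_right₀ s hn0]
      rw [norm_pow]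
      ring
    have hle1 : ‖Ψ s‖ ^ 2 ≤ 1 := by nlinarith [hΨle s, norm_nonneg (Ψ s)]
    have hge0 : (0:ℝ) ≤ ‖Ψ s‖ ^ 2 := sq_nonneg _
    have h2 : q (n * s) ≤ ‖Ψ s‖ ^ 2 := by
      rw [hqns]
      exact pow_le_of_le_one hge0 hle1 (by omega)
    have habs : |(n:ℝ) * s| ≤ δ := by
      rw [abs_mul, abs_of_pos hnpos]
      calc (n:ℝ) * |s| ≤ (n:ℝ) * (δ / n) := by
            exact mul_le_mul_of_nonneg_left hs (le_of_lt hnpos)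
        _ = δ := by field_simp
    have := hquad ((n:ℝ) * s) habs
    rw [hq0] at this
    linarith
  -- characteristic-function identity over the product measure
  have heq : ∀ s : ℝ, (∫ p : Ω × Ω, (1 - Real.cos (s * (X p.1 - X p.2))) ∂(P.prod P))
      = 1 - ‖Ψ s‖ ^ 2 := by
    intro s
    set f : Ω → ℂ := fun ω => Complex.exp (Complex.I * ((s * X ω : ℝ):ℂ)) with hfdef
    have hfi : Integrable f P := integrable_exp_I P (fun ω => s * X ω) (measurable_const.mul hX)
    have hDm : Measurable fun p : Ω × Ω => s * (X p.1 - X p.2) :=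
      measurable_const.mul ((hX.comp measurable_fst).sub (hX.comp measurable_snd))
    have hpt : ∀ p : Ω × Ω, f p.1 * (starRingEnd ℂ) (f p.2)
        = Complex.exp (Complex.I * ((s * (X p.1 - X p.2) : ℝ):ℂ)) := by
      intro p
      rw [hfdef]
      simp only [← Complex.exp_conj, ← Complex.exp_add]
      congr 1
      rw [map_mul, Complex.conj_I, Complex.conj_ofReal]
      push_cast
      ring
    have hprodint : Integrable (fun p : Ω × Ω => f p.1 * (starRingEnd ℂ) (f p.2)) (P.prod P) := by
      have := integrable_exp_I (P.prod P) (fun p : Ω × Ω => s * (X p.1 - X p.2)) hDm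
      exact this.congr (Filter.Eventually.of_forall fun p => (hpt p).symm)
    have hprod : Ψ s * (starRingEnd ℂ) (Ψ s)
        = ∫ p : Ω × Ω, f p.1 * (starRingEnd ℂ) (f p.2) ∂(P.prod P) := by
      rw [integral_prod_mul f (fun ω => (starRingEnd ℂ) (f ω))]
      congr 1
      exact (integral_conj).symm
    have hcosint : Integrable (fun p : Ω × Ω => Real.cos (s * (X p.1 - X p.2))) (P.prod P) := by
      have h1 := integrable_one_sub_cos (P.prod P) (fun p : Ω × Ω => s * (X p.1 - X p.2)) hDm
      have := (integrable_const (1:ℝ)).sub h1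
      exact this.congr (Filter.Eventually.of_forall fun p => by simp)
    have hre : ‖Ψ s‖ ^ 2 = ∫ p : Ω × Ω, Real.cos (s * (X p.1 - X p.2)) ∂(P.prod P) := by
      have h1 : (Ψ s * (starRingEnd ℂ) (Ψ s)).re = ‖Ψ s‖ ^ 2 := by
        rw [Complex.mul_conj]
        simp [Complex.normSq_eq_norm_sq, ← Complex.ofReal_pow]
      rw [← h1, hprod, ← RCLike.re_to_complex, ← integral_re hprodint]
      congr 1
      funext p
      rw [RCLike.re_to_complex, hpt p, mul_comm]
      exact Complex.exp_ofReal_mul_I_re _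
    rw [integral_sub (integrable_const 1) hcosint, hre]
    simp
  -- Fatou argument
  set D : Ω × Ω → ℝ := fun p => X p.1 - X p.2 with hDdef
  have hDmeas : Measurable D := (hX.comp measurable_fst).sub (hX.comp measurable_snd)
  set t : ℕ → ℝ := fun k => (δ / n) / (k + 1) with htdef
  have htpos : ∀ k, 0 < t k := by
    intro k; rw [htdef]; positivity
  have htle : ∀ k, |t k| ≤ δ / n := by
    intro k
    rw [abs_of_pos (htpos k), htdef]
    simp only
    refine div_le_self (by positivity) (by push_cast; linarith [Nat.cast_nonneg (α := ℝ) k])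
  have htlim : Tendsto t atTop (nhds 0) := by
    rw [htdef]
    have h1 : Tendsto (fun k : ℕ => 1 / ((k:ℝ) + 1)) atTop (nhds 0) :=
      tendsto_one_div_add_atTop_nhds_zero_nat
    have := h1.const_mul (δ / n)
    simpa [div_eq_mul_inv, mul_comm] using this
  have hts : Tendsto t atTop (nhdsWithin 0 {0}ᶜ) := by
    rw [tendsto_nhdsWithin_iff]
    exact ⟨htlim, Filter.Eventually.of_forall fun k => by
      simp only [Set.mem_compl_iff, Set.mem_singleton_iff]
      exact ne_of_gt (htpos k)⟩
  set F : ℕ → Ω × Ω → ENNReal :=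
    fun k p => ENNReal.ofReal (2 * (1 - Real.cos (t k * D p)) / (t k) ^ 2) with hFdef
  have hFmeas : ∀ k, Measurable (F k) := by
    intro k
    exact ((measurable_const.sub
      (Real.measurable_cos.comp (measurable_const.mul hDmeas))).const_mul 2|>.div_const
        _).ennreal_ofReal
  have hliminf : ∀ p, Filter.liminf (fun k => F k p) atTop = ENNReal.ofReal (D p ^ 2) := by
    intro p
    refine Filter.Tendsto.liminf_eq ?_
    exact (ENNReal.continuous_ofReal.tendsto _).comp ((tendsto_two_one_sub_cos (D p)).comp hts)
  have hFbound : ∀ k, (∫⁻ p, F k p ∂(P.prod P)) ≤ ENNReal.ofReal (2 * C * n ^ 2) := by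
    intro k
    have hint : Integrable (fun p : Ω × Ω => 2 * (1 - Real.cos (t k * D p)) / (t k) ^ 2)
        (P.prod P) := by
      exact ((integrable_one_sub_cos (P.prod P) (fun p => t k * D p)
        (measurable_const.mul hDmeas)).const_mul 2).div_const _
    have hnn : 0 ≤ᵐ[P.prod P] fun p : Ω × Ω => 2 * (1 - Real.cos (t k * D p)) / (t k) ^ 2 := by
      refine Filter.Eventually.of_forall fun p => ?_
      have h1 : (0:ℝ) ≤ 1 - Real.cos (t k * D p) := by
        nlinarith [Real.cos_le_one (t k * D p)]
      exact div_nonneg (by linarith) (sq_nonneg _)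
    rw [hFdef]
    rw [← ofReal_integral_eq_lintegral_ofReal hint hnn]
    apply ENNReal.ofReal_le_ofReal
    have hI : (∫ p : Ω × Ω, 2 * (1 - Real.cos (t k * D p)) / (t k) ^ 2 ∂(P.prod P))
        = 2 * (1 - ‖Ψ (t k)‖ ^ 2) / (t k) ^ 2 := by
      rw [integral_div, integral_const_mul]
      rw [show (fun p : Ω × Ω => 1 - Real.cos (t k * D p))
        = fun p : Ω × Ω => 1 - Real.cos (t k * (X p.1 - X p.2)) from rfl]
      rw [heq (t k)]
    rw [hI]
    have hk := key (t k) (htle k)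
    have htk2 : (0:ℝ) < (t k) ^ 2 := by positivity
    rw [div_le_iff₀ htk2]
    have hΨn : 0 ≤ 1 - ‖Ψ (t k)‖ ^ 2 := by nlinarith [hΨle (t k), norm_nonneg (Ψ (t k))]
    nlinarith [sq_nonneg (t k)]
  have hfatou : (∫⁻ p, ENNReal.ofReal (D p ^ 2) ∂(P.prod P)) ≤ ENNReal.ofReal (2 * C * n ^ 2) := by
    calc (∫⁻ p, ENNReal.ofReal (D p ^ 2) ∂(P.prod P))
        = ∫⁻ p, Filter.liminf (fun k => F k p) atTop ∂(P.prod P) := by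
          exact lintegral_congr fun p => (hliminf p).symm
      _ ≤ Filter.liminf (fun k => ∫⁻ p, F k p ∂(P.prod P)) atTop := lintegral_liminf_le hFmeas
      _ ≤ ENNReal.ofReal (2 * C * n ^ 2) :=
          Filter.liminf_le_of_frequently_le (Filter.Frequently.of_forall hFbound)
  have hint2 : Integrable (fun p : Ω × Ω => D p ^ 2) (P.prod P) := by
    constructor
    · exact (hDmeas.pow_const 2).aestronglyMeasurable
    · rw [hasFiniteIntegral_iff_ofReal (Filter.Eventually.of_forall fun p => sq_nonneg (D p))]
      exact lt_of_le_of_lt hfatou ENNReal.ofReal_lt_top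
  have haein : ∀ᵐ x ∂P, Integrable (fun y => (X x - X y) ^ 2) P := by
    exact hint2.prod_right_ae
  haveI : (ae P).NeBot := IsProbabilityMeasure.ae_neBot (μ := P)
  obtain ⟨x0, hx0⟩ := haein.exists
  have final := (hx0.add ((hX1.const_mul (2 * X x0)).sub (integrable_const (X x0 ^ 2))))
  refine final.congr (Filter.Eventually.of_forall fun ω => ?_)
  simp only [Pi.add_apply, Pi.sub_apply]
  ring
end
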